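/- For all natural numbers m and n, the Pell and Pell-Lucas numbers satisfy Σ_{k=1}^{n} P_{2k}^{2m+1} = Σ_{i=0}^{m} P_{2n+1}^{2i+1} · Σ_{j=0}^{m−i} ((-1)^{m+i} · 2^{3(i−m)} · (2m−2j+1) / (Q_{2m+1−2j} · (2i+1))) · C(2m+1, j) · C(m−j+i, 2i) + Σ_{j=0}^{m} ((-1)^{j+1} · P_{2m+1−2j} / (2^{3m} · Q_{2m+1−2j})) · C(2m+1, j), as an equality of rational numbers, where C(a,b) denotes the binomial coefficient. -/

import Mathlib

def pell : ℕ → ℤ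
  | 0 => 0
  | 1 => 1
  | n + 2 => 2 * pell (n + 1) + pell n

def pellLucas : ℕ → ℤ
  | 0 => 2
  | 1 => 2
  | n + 2 => 2 * pellLucas (n + 1) + pellLucas n

noncomputable def ra : ℝ := 1 + Real.sqrt 2
noncomputable def rb : ℝ := 1 - Real.sqrt 2

lemma sq2 : Real.sqrt 2 * Real.sqrt 2 = 2 :=
  Real.mul_self_sqrt (by norm_num)

lemma s2pos : (0:ℝ) < 2 * Real.sqrt 2 := by positivity

lemma rab : ra * rb = -1 := by
  unfold ra rb; nlinarith [sq2]

lemma hP : ∀ n : ℕ, 2 * Real.sqrt 2 * (pell n : ℝ) = ra ^ n - rb ^ n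
  | 0 => by simp [pell]
  | 1 => by simp [pell, ra, rb]; ring
  | (n+2) => by
    have h1 := hP (n+1)
    have h2 := hP n
    have ha : ra ^ (n+2) = 2 * ra ^ (n+1) + ra ^ n := by
      have : ra ^ 2 = 2 * ra + 1 := by unfold ra; nlinarith [sq2]
      calc ra ^ (n+2) = ra ^ n * ra ^ 2 := by ring
        _ = 2 * ra ^ (n+1) + ra ^ n := by rw [this]; ring
    have hb : rb ^ (n+2) = 2 * rb ^ (n+1) + rb ^ n := by
      have : rb ^ 2 = 2 * rb + 1 := by unfold rb; nlinarith [sq2]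
      calc rb ^ (n+2) = rb ^ n * rb ^ 2 := by ring
        _ = 2 * rb ^ (n+1) + rb ^ n := by rw [this]; ring
    have : (pell (n+2) : ℝ) = 2 * (pell (n+1) : ℝ) + (pell n : ℝ) := by
      rw [show pell (n+2) = 2 * pell (n+1) + pell n from rfl]; push_cast; ring
    rw [this, ha, hb]; linarith

lemma hQ : ∀ n : ℕ, (pellLucas n : ℝ) = ra ^ n + rb ^ n
  | 0 => by norm_num [pellLucas]
  | 1 => by
    show ((2:ℤ):ℝ) = ra ^ 1 + rb ^ 1
    unfold ra rb; push_cast; ring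
  | (n+2) => by
    have h1 := hQ (n+1)
    have h2 := hQ n
    have ha : ra ^ (n+2) = 2 * ra ^ (n+1) + ra ^ n := by
      have : ra ^ 2 = 2 * ra + 1 := by unfold ra; nlinarith [sq2]
      calc ra ^ (n+2) = ra ^ n * ra ^ 2 := by ring
        _ = 2 * ra ^ (n+1) + ra ^ n := by rw [this]; ring
    have hb : rb ^ (n+2) = 2 * rb ^ (n+1) + rb ^ n := by
      have : rb ^ 2 = 2 * rb + 1 := by unfold rb; nlinarith [sq2]
      calc rb ^ (n+2) = rb ^ n * rb ^ 2 := by ring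
        _ = 2 * rb ^ (n+1) + rb ^ n := by rw [this]; ring
    have : (pellLucas (n+2) : ℝ) = 2 * (pellLucas (n+1) : ℝ) + (pellLucas n : ℝ) := by
      rw [show pellLucas (n+2) = 2 * pellLucas (n+1) + pellLucas n from rfl]; push_cast; ring
    rw [this, ha, hb]; linarith

lemma pellLucas_pos : ∀ n : ℕ, 0 < pellLucas n
  | 0 => by norm_num [pellLucas]
  | 1 => by norm_num [pellLucas]
  | (n+2) => by
    have h1 := pellLucas_pos (n+1)
    have h2 := pellLucas_pos n
    rw [show pellLucas (n+2) = 2 * pellLucas (n+1) + pellLucas n from rfl]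
    positivity

def dc (t i : ℕ) : ℚ := (-1) ^ (t + i) * (2 * t + 1) / (2 * i + 1) * ((t + i).choose (2 * i))

lemma dc_zero (t i : ℕ) (h : t < i) : dc t i = 0 := by
  unfold dc
  rw [Nat.choose_eq_zero_of_lt (by omega)]
  simp

lemma dc_zero_rec (t : ℕ) : dc (t+2) 0 + 2 * dc (t+1) 0 + dc t 0 = 0 := by
  unfold dc
  simp [pow_add]
  ring

lemma dc_rec (t i : ℕ) : dc (t+2) (i+1) + 2 * dc (t+1) (i+1) + dc t (i+1) = dc (t+1) i := by
  rcases le_or_gt i (t+1) with h | h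
  · set E : ℚ := ((t+i+1).choose (2*i) : ℚ) with hEdef
    set F : ℚ := ((t+i+1).choose (2*i+1) : ℚ) with hFdef
    set D : ℚ := ((t+i+1).choose (2*i+2) : ℚ) with hDdef
    set B : ℚ := ((t+i+2).choose (2*i+2) : ℚ) with hBdef
    have habs : F * (2*(i:ℚ)+1) = E * ((t:ℚ)+1-i) := by
      have h0 := Nat.choose_succ_right_eq (t+i+1) (2*i)
      have h1 : t+i+1 - 2*i = t+1-i := by omega
      rw [h1] at h0
      have := congrArg (fun x : ℕ => (x : ℚ)) h0
      push_cast [Nat.cast_sub (by omega : i ≤ t+1)] at this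
      convert this using 1
    have hF : F = E * ((t:ℚ)+1-i) / (2*(i:ℚ)+1) := by
      field_simp
      linarith [habs]
    have hB : B = F + D := by
      rw [hBdef, hFdef, hDdef,
        show t+i+2 = (t+i+1)+1 by omega, show 2*i+2 = (2*i+1)+1 by omega,
        Nat.choose_succ_succ]
      push_cast; ring
    have hA : ((t+2+(i+1)).choose (2*(i+1)) : ℚ) = E + F + B := by
      rw [show t+2+(i+1) = (t+i+2)+1 by omega, show 2*(i+1) = (2*i+1)+1 by omega,
        Nat.choose_succ_succ, show t+i+2 = (t+i+1)+1 by omega,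
        show 2*i+1 = (2*i)+1 by rfl, Nat.choose_succ_succ]
      push_cast; ring
    have hB' : ((t+1+(i+1)).choose (2*(i+1)) : ℚ) = B := by
      rw [show t+1+(i+1) = t+i+2 by omega, show 2*(i+1) = 2*i+2 by omega]
    have hD' : ((t+(i+1)).choose (2*(i+1)) : ℚ) = D := by
      rw [show t+(i+1) = t+i+1 by omega, show 2*(i+1) = 2*i+2 by omega]
    have hE' : ((t+1+i).choose (2*i) : ℚ) = E := by
      rw [show t+1+i = t+i+1 by omega]
    unfold dc
    rw [hA, hB', hD', hE', hB, hF]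
    rw [show t+2+(i+1) = (t+i)+3 by omega, show t+1+(i+1) = (t+i)+2 by omega,
      show t+(i+1) = (t+i)+1 by omega, show t+1+i = (t+i)+1 by omega]
    have h1 : (2*(i:ℚ)+1) ≠ 0 := by positivity
    have h3 : (2*((i:ℚ)+1)+1) ≠ 0 := by positivity
    push_cast
    field_simp
    ring
  · rw [dc_zero _ _ (by omega), dc_zero _ _ (by omega), dc_zero _ _ (by omega),
      dc_zero _ _ (by omega)]
    ring

lemma dickson : ∀ (t : ℕ) (y z : ℝ), y * z = -1 →
    y ^ (2*t+1) - z ^ (2*t+1) = ∑ i ∈ Finset.range (t+1), (dc t i : ℝ) * (y - z) ^ (2*i+1)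
  | 0, y, z, h => by
    have : (dc 0 0 : ℚ) = 1 := by norm_num [dc]
    simp [this]
  | 1, y, z, h => by
    rw [Finset.sum_range_succ, Finset.sum_range_one]
    have c0 : (dc 1 0 : ℚ) = -3 := by norm_num [dc]
    have c1 : (dc 1 1 : ℚ) = 1 := by norm_num [dc]
    rw [c0, c1]
    push_cast
    linear_combination (3*(y-z)) * h
  | (t+2), y, z, h => by
    have ih1 := dickson (t+1) y z h
    have ih0 := dickson t y z h
    have hL : y^(2*(t+2)+1) - z^(2*(t+2)+1)
        = ((y-z)^2 - 2) * (y^(2*(t+1)+1) - z^(2*(t+1)+1)) - (y^(2*t+1) - z^(2*t+1)) := by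
      rw [show 2*(t+2)+1 = (2*t+1)+4 by omega, show 2*(t+1)+1 = (2*t+1)+2 by omega,
        pow_add, pow_add, pow_add, pow_add]
      linear_combination (2*(y^(2*t+1)*y^2 - z^(2*t+1)*z^2) + (y^(2*t+1)-z^(2*t+1))*(1-y*z)) * h
    rw [hL, ih1, ih0]
    set s := y - z with hs
    have ext1 : ∑ i ∈ Finset.range (t+1+1), (dc (t+1) i : ℝ) * s^(2*i+1)
        = ∑ i ∈ Finset.range (t+2+1), (dc (t+1) i : ℝ) * s^(2*i+1) := by
      rw [Finset.sum_range_succ (n := t+2), dc_zero (t+1) (t+2) (by omega)]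
      push_cast; ring
    have ext0 : ∑ i ∈ Finset.range (t+1), (dc t i : ℝ) * s^(2*i+1)
        = ∑ i ∈ Finset.range (t+2+1), (dc t i : ℝ) * s^(2*i+1) := by
      rw [Finset.sum_range_succ (n := t+2), Finset.sum_range_succ (n := t+1),
        dc_zero t (t+2) (by omega), dc_zero t (t+1) (by omega)]
      push_cast; ring
    rw [ext1, ext0]
    have main : (∑ i ∈ Finset.range (t+2+1), (dc (t+2) i : ℝ) * s^(2*i+1))
        + 2 * (∑ i ∈ Finset.range (t+2+1), (dc (t+1) i : ℝ) * s^(2*i+1))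
        + (∑ i ∈ Finset.range (t+2+1), (dc t i : ℝ) * s^(2*i+1))
        = (∑ i ∈ Finset.range (t+2+1), (dc (t+1) i : ℝ) * s^(2*i+1)) * s^2 := by
      rw [Finset.mul_sum, Finset.sum_mul, ← Finset.sum_add_distrib, ← Finset.sum_add_distrib]
      rw [Finset.sum_range_succ
        (f := fun i => (dc (t+1) i : ℝ) * s^(2*i+1) * s^2) (n := t+2),
        dc_zero (t+1) (t+2) (by omega)]
      rw [Finset.sum_range_succ']
      have hcongr : ∀ i ∈ Finset.range (t+2),
          (dc (t+2) (i+1) : ℝ) * s^(2*(i+1)+1) + 2*((dc (t+1) (i+1) : ℝ) * s^(2*(i+1)+1))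
            + (dc t (i+1) : ℝ) * s^(2*(i+1)+1)
          = (dc (t+1) i : ℝ) * s^(2*i+1) * s^2 := by
        intro i _
        have hc : ((dc (t+2) (i+1) : ℚ):ℝ) + 2*((dc (t+1) (i+1) : ℚ):ℝ)
            + ((dc t (i+1) : ℚ):ℝ) = ((dc (t+1) i : ℚ):ℝ) := by
          exact_mod_cast congrArg (fun q : ℚ => (q : ℝ)) (dc_rec t i)
        rw [show 2*(i+1)+1 = (2*i+1)+2 by omega, pow_add]
        linear_combination (s^(2*i+1) * s^2) * hc
      rw [Finset.sum_congr rfl hcongr]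
      have h0 : ((dc (t+2) 0 : ℚ):ℝ) + 2*((dc (t+1) 0 : ℚ):ℝ) + ((dc t 0 : ℚ):ℝ) = 0 := by
        exact_mod_cast congrArg (fun q : ℚ => (q : ℝ)) (dc_zero_rec t)
      push_cast
      linear_combination s * h0
    linear_combination -main

lemma sumpell (d : ℕ) (hd : Odd d) : ∀ n : ℕ,
    (pellLucas d : ℝ) * ∑ k ∈ Finset.Icc 1 n, (pell (2*k*d) : ℝ)
      = (pell ((2*n+1)*d) : ℝ) - (pell d : ℝ) := by
  intro n
  induction n with
  | zero => norm_num
  | succ n ih =>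
    rw [Finset.sum_Icc_succ_top (by omega : 1 ≤ n+1), mul_add, ih]
    have key : (pellLucas d : ℝ) * (pell (2*(n+1)*d) : ℝ)
        = (pell ((2*(n+1)+1)*d) : ℝ) - (pell ((2*n+1)*d) : ℝ) := by
      have hAB : ra^d * rb^d = -1 := by
        rw [← mul_pow, rab, hd.neg_one_pow]
      have h1 := hP ((2*n+1)*d)
      have h2 := hP (2*(n+1)*d)
      have h3 := hP ((2*(n+1)+1)*d)
      have hq := hQ d
      have e2 : 2*(n+1)*d = (2*n+1)*d + d := by ring
      have e3 : (2*(n+1)+1)*d = ((2*n+1)*d + d) + d := by ring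
      rw [e2, pow_add, pow_add] at h2
      rw [e3, pow_add, pow_add, pow_add, pow_add] at h3
      have cancel : 2 * Real.sqrt 2 * ((pellLucas d : ℝ) * (pell (2*(n+1)*d) : ℝ))
          = 2 * Real.sqrt 2 * ((pell ((2*(n+1)+1)*d) : ℝ) - (pell ((2*n+1)*d) : ℝ)) := by
        rw [e2, e3, mul_sub, h1,
          show (2:ℝ) * Real.sqrt 2 * ((pellLucas d : ℝ) * (pell ((2*n+1)*d + d) : ℝ))
            = (pellLucas d : ℝ) * (2 * Real.sqrt 2 * (pell ((2*n+1)*d + d) : ℝ)) by ring,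
          h2, hq]
        linear_combination -h3 + (ra^((2*n+1)*d) - rb^((2*n+1)*d)) * hAB
      exact mul_left_cancel₀ (ne_of_gt s2pos) cancel
    push_cast [key]
    ring

lemma powred (m k : ℕ) : (8:ℝ)^m * (pell (2*k) : ℝ)^(2*m+1)
    = ∑ j ∈ Finset.range (m+1),
        (-1:ℝ)^j * ((2*m+1).choose j : ℝ) * (pell (2*k*(2*(m-j)+1)) : ℝ) := by
  set X := ra ^ (2*k) with hX
  set Y := rb ^ (2*k) with hY
  have hXY : X * Y = 1 := by
    rw [hX, hY, ← mul_pow, rab, pow_mul]; norm_num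
  have hPk := hP (2*k)
  have cancel : 2 * Real.sqrt 2 * ((8:ℝ)^m * (pell (2*k) : ℝ)^(2*m+1))
      = 2 * Real.sqrt 2 * ∑ j ∈ Finset.range (m+1),
        (-1:ℝ)^j * ((2*m+1).choose j : ℝ) * (pell (2*k*(2*(m-j)+1)) : ℝ) := by
    have hL : 2 * Real.sqrt 2 * ((8:ℝ)^m * (pell (2*k) : ℝ)^(2*m+1)) = (X - Y)^(2*m+1) := by
      rw [← hPk]
      rw [show (2*Real.sqrt 2*(pell (2*k):ℝ))^(2*m+1)
          = (2*Real.sqrt 2)^(2*m+1) * (pell (2*k):ℝ)^(2*m+1) by rw [mul_pow],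
        show (2*Real.sqrt 2)^(2*m+1) = ((2*Real.sqrt 2)^2)^m * (2*Real.sqrt 2) by
          rw [← pow_mul, pow_succ], show (2*Real.sqrt 2)^2 = 8 by nlinarith [sq2]]
      ring
    rw [hL, sub_pow]
    rw [show 2*m+1+1 = (m+1) + (m+1) by omega, Finset.sum_range_add, Finset.mul_sum,
      ← Finset.sum_range_reflect (fun i => (-1:ℝ)^(m+1+i+(2*m+1)) * X^(m+1+i)
        * Y^(2*m+1-(m+1+i)) * ((2*m+1).choose (m+1+i) : ℝ)) (m+1),
      ← Finset.sum_add_distrib]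
    apply Finset.sum_congr rfl
    intro j hj
    rw [Finset.mem_range] at hj
    obtain ⟨e, rfl⟩ : ∃ e, m = j + e := ⟨m - j, by omega⟩
    have hXYj : X^j * Y^j = 1 := by rw [← mul_pow, hXY, one_pow]
    have hd := hP (2*k*(2*(j+e-j)+1))
    rw [show j+e-j = e by omega] at hd ⊢
    have hda : ra^(2*k*(2*e+1)) = X^(2*e+1) := by rw [hX, ← pow_mul]
    have hdb : rb^(2*k*(2*e+1)) = Y^(2*e+1) := by rw [hY, ← pow_mul]
    rw [hda, hdb] at hd
    rw [show j+e+1+(j+e+1-1-j) = j+(2*e+1) by omega,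
      show 2*(j+e)+1-(j+(2*e+1)) = j by omega,
      show 2*(j+e)+1-j = j+(2*e+1) by omega]
    have hch : (2*(j+e)+1).choose (j+(2*e+1)) = (2*(j+e)+1).choose j := by
      rw [show j+(2*e+1) = 2*(j+e)+1-j by omega]
      exact Nat.choose_symm (by omega)
    rw [hch]
    have ho1 : Odd (2*(j+e)+1) := ⟨j+e, by ring⟩
    have ho2 : Odd (2*e+1) := ⟨e, by ring⟩
    rw [pow_add ((-1:ℝ)) j (2*(j+e)+1), pow_add ((-1:ℝ)) (j+(2*e+1)) (2*(j+e)+1),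
      pow_add ((-1:ℝ)) j (2*e+1), ho1.neg_one_pow, ho2.neg_one_pow,
      pow_add X j (2*e+1), pow_add Y j (2*e+1)]
    linear_combination ((-1:ℝ)^j * ((2*(j+e)+1).choose j : ℝ)
        * (X^(2*e+1) - Y^(2*e+1))) * hXYj - ((-1:ℝ)^j * ((2*(j+e)+1).choose j : ℝ)) * hd
  exact mul_left_cancel₀ (ne_of_gt s2pos) cancel

lemma tri (m : ℕ) (f : ℕ → ℕ → ℝ) (hf : ∀ i j, i ≤ m → j ≤ m → m < i + j → f i j = 0) :
    ∑ j ∈ Finset.range (m+1), ∑ i ∈ Finset.range (m-j+1), f i j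
      = ∑ i ∈ Finset.range (m+1), ∑ j ∈ Finset.range (m-i+1), f i j := by
  have e1 : ∀ j ∈ Finset.range (m+1),
      ∑ i ∈ Finset.range (m-j+1), f i j = ∑ i ∈ Finset.range (m+1), f i j := by
    intro j hj
    rw [Finset.mem_range] at hj
    apply Finset.sum_subset (Finset.range_subset_range.2 (by omega))
    intro i hi hni
    rw [Finset.mem_range] at hi hni
    exact hf i j (by omega) (by omega) (by omega)
  rw [Finset.sum_congr rfl e1, Finset.sum_comm]
  apply Finset.sum_congr rfl
  intro i hi
  rw [Finset.mem_range] at hi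
  symm
  apply Finset.sum_subset (Finset.range_subset_range.2 (by omega))
  intro j hj hnj
  rw [Finset.mem_range] at hj hnj
  exact hf i j (by omega) (by omega) (by omega)

theorem melham_sum (m n : ℕ) :
    (∑ k ∈ Finset.Icc 1 n, (pell (2 * k) : ℚ) ^ (2 * m + 1)) =
      (∑ i ∈ Finset.range (m + 1), (pell (2 * n + 1) : ℚ) ^ (2 * i + 1) *
        ∑ j ∈ Finset.range (m - i + 1),
          ((-1 : ℚ) ^ (m + i) * 2 ^ (3 * i) / 2 ^ (3 * m) * (2 * (m : ℚ) - 2 * j + 1) /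
              ((pellLucas (2 * m + 1 - 2 * j) : ℚ) * (2 * i + 1))) *
            (Nat.choose (2 * m + 1) j : ℚ) * (Nat.choose (m - j + i) (2 * i) : ℚ)) +
      ∑ j ∈ Finset.range (m + 1),
        ((-1 : ℚ) ^ (j + 1) * (pell (2 * m + 1 - 2 * j) : ℚ) /
            (2 ^ (3 * m) * (pellLucas (2 * m + 1 - 2 * j) : ℚ))) *
          (Nat.choose (2 * m + 1) j : ℚ) := by
  have hinj : ∀ x y : ℚ, (x:ℝ) = (y:ℝ) → x = y := fun x y h => by exact_mod_cast h
  apply hinj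
  push_cast
  have h8 : ((8:ℝ)^m) ≠ 0 := by positivity
  have hQpos : ∀ d : ℕ, (0:ℝ) < (pellLucas d : ℝ) := fun d => by
    exact_mod_cast pellLucas_pos d
  have hQne : ∀ d : ℕ, (pellLucas d : ℝ) ≠ 0 := fun d => ne_of_gt (hQpos d)
  have hyz : ra^(2*n+1) * rb^(2*n+1) = -1 := by
    rw [← mul_pow, rab]
    exact Odd.neg_one_pow ⟨n, by ring⟩
  have hPx := hP (2*n+1)
  have dickP : ∀ t : ℕ, (pell ((2*n+1)*(2*t+1)) : ℝ)
      = ∑ i ∈ Finset.range (t+1), (dc t i : ℝ) * 8^i * (pell (2*n+1) : ℝ)^(2*i+1) := by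
    intro t
    have hD := dickson t (ra^(2*n+1)) (rb^(2*n+1)) hyz
    have hPd := hP ((2*n+1)*(2*t+1))
    rw [← pow_mul, ← pow_mul, ← hPd, ← hPx] at hD
    apply mul_left_cancel₀ (ne_of_gt s2pos)
    rw [hD, Finset.mul_sum]
    apply Finset.sum_congr rfl
    intro i _
    rw [mul_pow,
      show (2*Real.sqrt 2)^(2*i+1) = ((2*Real.sqrt 2)^2)^i * (2*Real.sqrt 2) by
        rw [← pow_mul, pow_succ],
      show (2*Real.sqrt 2)^2 = 8 by nlinarith [sq2]]
    ring
  have hsum : ∀ j, j ≤ m → ∑ k ∈ Finset.Icc 1 n, (pell (2*k*(2*(m-j)+1)) : ℝ)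
      = ((pell ((2*n+1)*(2*(m-j)+1)) : ℝ) - (pell (2*(m-j)+1) : ℝ))
          / (pellLucas (2*(m-j)+1) : ℝ) := by
    intro j hj
    rw [eq_div_iff (hQne _)]
    linear_combination sumpell (2*(m-j)+1) ⟨m-j, by ring⟩ n
  apply mul_left_cancel₀ h8
  -- abbreviations
  set x : ℝ := (pell (2*n+1) : ℝ) with hxdef
  set T1 : ℝ := ∑ i ∈ Finset.range (m+1), ∑ j ∈ Finset.range (m-i+1),
      (-1:ℝ)^j * ((2*m+1).choose j : ℝ) / (pellLucas (2*(m-j)+1) : ℝ)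
        * (dc (m-j) i : ℝ) * 8^i * x^(2*i+1) with hT1def
  set T2 : ℝ := ∑ j ∈ Finset.range (m+1),
      -((-1:ℝ)^j * ((2*m+1).choose j : ℝ) * (pell (2*(m-j)+1) : ℝ)
        / (pellLucas (2*(m-j)+1) : ℝ)) with hT2def
  have eL : (8:ℝ)^m * ∑ k ∈ Finset.Icc 1 n, (pell (2*k) : ℝ)^(2*m+1) = T1 + T2 := by
    rw [Finset.mul_sum]
    calc ∑ k ∈ Finset.Icc 1 n, (8:ℝ)^m * (pell (2*k) : ℝ)^(2*m+1)
        = ∑ k ∈ Finset.Icc 1 n, ∑ j ∈ Finset.range (m+1),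
            (-1:ℝ)^j * ((2*m+1).choose j : ℝ) * (pell (2*k*(2*(m-j)+1)) : ℝ) := by
          exact Finset.sum_congr rfl fun k _ => powred m k
      _ = ∑ j ∈ Finset.range (m+1), ∑ k ∈ Finset.Icc 1 n,
            (-1:ℝ)^j * ((2*m+1).choose j : ℝ) * (pell (2*k*(2*(m-j)+1)) : ℝ) :=
          Finset.sum_comm
      _ = ∑ j ∈ Finset.range (m+1), ((-1:ℝ)^j * ((2*m+1).choose j : ℝ)
            * (((pell ((2*n+1)*(2*(m-j)+1)) : ℝ) - (pell (2*(m-j)+1) : ℝ))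
              / (pellLucas (2*(m-j)+1) : ℝ))) := by
          apply Finset.sum_congr rfl
          intro j hj
          rw [Finset.mem_range] at hj
          rw [← Finset.mul_sum, hsum j (by omega)]
      _ = (∑ j ∈ Finset.range (m+1), ∑ i ∈ Finset.range (m-j+1),
            (-1:ℝ)^j * ((2*m+1).choose j : ℝ) / (pellLucas (2*(m-j)+1) : ℝ)
              * (dc (m-j) i : ℝ) * 8^i * x^(2*i+1)) + T2 := by
          rw [hT2def, ← Finset.sum_add_distrib]
          apply Finset.sum_congr rfl
          intro j hj
          rw [dickP (m-j), sub_div, mul_sub, Finset.sum_div, Finset.mul_sum,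
            sub_eq_add_neg]
          congr 1
          · apply Finset.sum_congr rfl
            intro i _
            ring
          · ring
      _ = T1 + T2 := by
          rw [hT1def]
          congr 1
          apply tri
          intro i j hi hj hij
          rw [dc_zero (m-j) i (by omega)]
          push_cast
          ring
  rw [eL, mul_add]
  congr 1
  · -- T1 = 8^m * (first RHS sum)
    rw [hT1def, Finset.mul_sum]
    apply Finset.sum_congr rfl
    intro i hi
    rw [Finset.mem_range] at hi
    rw [Finset.mul_sum, Finset.mul_sum]
    apply Finset.sum_congr rfl
    intro j hj
    rw [Finset.mem_range] at hj
    have e1 : (2:ℝ)^(3*i) = 8^i := by rw [pow_mul]; norm_num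
    have e2 : (2:ℝ)^(3*m) = 8^m := by rw [pow_mul]; norm_num
    have e3 : 2*(m:ℝ) - 2*(j:ℝ) + 1 = ((2*(m-j)+1 : ℕ) : ℝ) := by
      push_cast [Nat.cast_sub (by omega : j ≤ m)]
      ring
    have e4 : 2*m+1-2*j = 2*(m-j)+1 := by omega
    have e5 : (-1:ℝ)^(m+i) = (-1)^j * (-1)^((m-j)+i) := by
      rw [← pow_add, show j+((m-j)+i) = m+i by omega]
    have e6 : m-j+i = (m-j)+i := rfl
    rw [e4]
    unfold dc
    push_cast
    rw [e1, e2, e5]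
    push_cast [Nat.cast_sub (by omega : j ≤ m), Nat.cast_sub (by omega : 2*j ≤ 2*m)]
    have h21 : (2*(i:ℝ)+1) ≠ 0 := by positivity
    field_simp [hQne, h21, h8]
  · -- T2 = 8^m * (second RHS sum)
    rw [hT2def, Finset.mul_sum]
    apply Finset.sum_congr rfl
    intro j hj
    rw [Finset.mem_range] at hj
    have e2 : (2:ℝ)^(3*m) = 8^m := by rw [pow_mul]; norm_num
    have e4 : 2*m+1-2*j = 2*(m-j)+1 := by omega
    rw [e4, e2, pow_succ]
    field_simp [hQne, h8]
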